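/- For every p > 1 and every x > 0, one has log(cosh_p(x)) > (x/p) · tanh_p(x)^(p−1). -/

import Mathlib

open Real Set Filter Topology
open scoped NNReal

/-- Generalized inverse sine: `arcsinp p x = ∫₀ˣ (1 - tᵖ)^(-1/p) dt`. -/
noncomputable def arcsinp (p x : ℝ) : ℝ := ∫ t in (0:ℝ)..x, (1 - t ^ p) ^ (-(1/p))

/-- The generalized half-pi: `π_p/2 = arcsin_p 1`. -/
noncomputable def pipHalf (p : ℝ) : ℝ := arcsinp p 1

/-- Generalized sine: the inverse of `arcsinp p` viewed as a map on `[0,1]`. -/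
noncomputable def sinp (p : ℝ) : ℝ → ℝ := Function.invFunOn (arcsinp p) (Set.Icc 0 1)

/-- Generalized cosine. -/
noncomputable def cosp (p x : ℝ) : ℝ := (1 - (sinp p x) ^ p) ^ (1/p : ℝ)

/-- Generalized tangent. -/
noncomputable def tanp (p x : ℝ) : ℝ := sinp p x / cosp p x

/-- Generalized inverse hyperbolic sine: `arsinhp p x = ∫₀ˣ (1 + tᵖ)^(-1/p) dt`. -/
noncomputable def arsinhp (p x : ℝ) : ℝ := ∫ t in (0:ℝ)..x, (1 + t ^ p) ^ (-(1/p))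

/-- Generalized hyperbolic sine: the inverse of `arsinhp p` viewed as a map on `[0,∞)`. -/
noncomputable def sinhp (p : ℝ) : ℝ → ℝ := Function.invFunOn (arsinhp p) (Set.Ici 0)

/-- Generalized hyperbolic cosine. -/
noncomputable def coshp (p x : ℝ) : ℝ := (1 + (sinhp p x) ^ p) ^ (1/p : ℝ)

/-- Generalized hyperbolic tangent. -/
noncomputable def tanhp (p x : ℝ) : ℝ := sinhp p x / coshp p x

/-! ### Auxiliary development -/

/-- An everywhere-continuous version of the `arsinhp` integrand. -/
noncomputable def Fb (p t : ℝ) : ℝ := (1 + |t| ^ p) ^ (-(1/p))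

/-- The primitive of `Fb`. -/
noncomputable def Gb (p y : ℝ) : ℝ := ∫ t in (0:ℝ)..y, Fb p t

lemma Fb_cont {p : ℝ} (hp : 0 < p) : Continuous (Fb p) := by
  have h1 : Continuous fun t : ℝ => 1 + |t| ^ p :=
    continuous_const.add (continuous_abs.rpow_const fun t => Or.inr hp.le)
  refine h1.rpow_const fun t => Or.inl ?_
  have : (0:ℝ) ≤ |t| ^ p := Real.rpow_nonneg (abs_nonneg t) p
  positivity

lemma Fb_pos (p t : ℝ) : 0 < Fb p t := by
  have : (0:ℝ) ≤ |t| ^ p := Real.rpow_nonneg (abs_nonneg t) p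
  exact Real.rpow_pos_of_pos (by linarith) _

lemma Fb_le_one {p : ℝ} (hp : 0 < p) (t : ℝ) : Fb p t ≤ 1 := by
  have h : (0:ℝ) ≤ |t| ^ p := Real.rpow_nonneg (abs_nonneg t) p
  exact Real.rpow_le_one_of_one_le_of_nonpos (by linarith) (neg_nonpos.2 (by positivity))

lemma Gb_hasDeriv {p : ℝ} (hp : 0 < p) (y : ℝ) : HasDerivAt (Gb p) (Fb p y) y :=
  ((Fb_cont hp).integral_hasStrictDerivAt 0 y).hasDerivAt

lemma Gb_cont {p : ℝ} (hp : 0 < p) : Continuous (Gb p) :=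
  continuous_iff_continuousAt.2 fun y => (Gb_hasDeriv hp y).continuousAt

lemma arsinhp_eq_Gb {p : ℝ} {y : ℝ} (hy : 0 ≤ y) : arsinhp p y = Gb p y := by
  refine intervalIntegral.integral_congr fun t ht => ?_
  rw [Set.uIcc_of_le hy] at ht
  simp [Fb, abs_of_nonneg ht.1]

lemma Gb_zero (p : ℝ) : Gb p 0 = 0 := intervalIntegral.integral_same

lemma Gb_le {p : ℝ} (hp : 0 < p) {y : ℝ} (hy : 0 ≤ y) : Gb p y ≤ y := by
  have h := intervalIntegral.integral_mono_on hy ((Fb_cont hp).intervalIntegrable 0 y)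
    (intervalIntegrable_const (μ := MeasureTheory.volume) (c := (1:ℝ))) (fun t _ => Fb_le_one hp t)
  simpa [Gb] using h

lemma one_add_rpow_le {p t : ℝ} (hp : 1 ≤ p) (ht : 0 ≤ t) : 1 + t ^ p ≤ (1 + t) ^ p := by
  have h2 : ((1:ℝ≥0)^p + t.toNNReal^p : ℝ≥0) ≤ (((1:ℝ≥0) + t.toNNReal)^p : ℝ≥0) :=
    NNReal.add_rpow_le_rpow_add _ _ hp
  have h3 := NNReal.coe_le_coe.2 h2
  simpa [NNReal.coe_rpow, Real.coe_toNNReal t ht] using h3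

lemma log_le_Gb {p : ℝ} (hp : 1 < p) {y : ℝ} (hy : 0 ≤ y) : Real.log (1 + y) ≤ Gb p y := by
  have hp0 : 0 < p := lt_trans one_pos hp
  have hkey : ∀ t ∈ Set.Icc (0:ℝ) y, (1 + t)⁻¹ ≤ Fb p t := by
    intro t ht
    obtain ⟨ht0, -⟩ := ht
    have h1 : 1 + t ^ p ≤ (1 + t) ^ p := one_add_rpow_le hp.le ht0
    have hb : (0:ℝ) < 1 + t ^ p := by
      have := Real.rpow_nonneg ht0 p; linarith
    have h4 : ((1 + t) ^ p) ^ (-(1/p)) ≤ (1 + t ^ p) ^ (-(1/p)) :=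
      Real.rpow_le_rpow_of_nonpos hb h1 (neg_nonpos.2 (by positivity))
    have h5 : ((1 + t) ^ p) ^ (-(1/p)) = (1 + t)⁻¹ := by
      rw [← Real.rpow_mul (by linarith : (0:ℝ) ≤ 1 + t),
        show p * (-(1/p)) = -1 by field_simp, Real.rpow_neg_one]
    rw [Fb, abs_of_nonneg ht0]
    rw [h5] at h4
    exact h4
  have hintInt : IntervalIntegrable (fun t : ℝ => (1 + t)⁻¹) MeasureTheory.volume 0 y := by
    apply ContinuousOn.intervalIntegrable
    rw [Set.uIcc_of_le hy]
    exact ContinuousOn.inv₀ (by fun_prop) (fun t ht => by have := ht.1; intro h; linarith)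
  have hint : (∫ t in (0:ℝ)..y, (1 + t)⁻¹) = Real.log (1 + y) := by
    have := intervalIntegral.integral_comp_add_left (a := (0:ℝ)) (b := y)
      (fun x : ℝ => x⁻¹) 1
    rw [show (∫ t in (0:ℝ)..y, (1 + t)⁻¹) = ∫ t in (0:ℝ)..y, (fun x : ℝ => x⁻¹) (1 + t) from rfl,
      this, integral_inv]
    · norm_num
    · rw [Set.uIcc_of_le (by linarith : (1:ℝ) + 0 ≤ 1 + y)]
      rintro ⟨h1, -⟩; linarith
  calc Real.log (1 + y) = ∫ t in (0:ℝ)..y, (1 + t)⁻¹ := hint.symm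
    _ ≤ Gb p y := intervalIntegral.integral_mono_on hy hintInt
        ((Fb_cont hp0).intervalIntegrable 0 y) hkey

lemma exists_arsinh {p : ℝ} (hp : 1 < p) {x : ℝ} (hx : 0 < x) :
    ∃ y ∈ Set.Ici (0:ℝ), arsinhp p y = x := by
  have hp0 : 0 < p := lt_trans one_pos hp
  set Y := Real.exp x - 1 with hY
  have hY0 : 0 ≤ Y := by
    have := Real.one_le_exp hx.le; simp only [hY]; linarith
  have hYx : x ≤ Gb p Y := by
    have h := log_le_Gb hp hY0
    rwa [show (1:ℝ) + Y = Real.exp x by rw [hY]; ring, Real.log_exp] at h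
  have hxmem : x ∈ Set.Icc (Gb p 0) (Gb p Y) := by
    rw [Gb_zero]; exact ⟨hx.le, hYx⟩
  obtain ⟨y, hy, hyx⟩ := intermediate_value_Icc hY0 (Gb_cont hp0).continuousOn hxmem
  exact ⟨y, hy.1, by rw [arsinhp_eq_Gb hy.1, hyx]⟩

lemma phi_pos {p : ℝ} (hp : 1 < p) {s : ℝ} (hs : 0 < s) :
    0 < Real.log (1 + s ^ p) - Gb p s * (s ^ (p-1) * (1 + s ^ p) ^ (-((p-1)/p))) := by
  have hp0 : 0 < p := lt_trans one_pos hp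
  set q : ℝ := (p-1)/p with hq
  set Φ : ℝ → ℝ := fun y => Real.log (1 + y ^ p) - Gb p y * (y ^ (p-1) * (1 + y ^ p) ^ (-q))
    with hΦ
  have hcont : ContinuousOn Φ (Set.Ici 0) := by
    intro y hy
    have hy0 : (0:ℝ) ≤ y := hy
    have hb : (0:ℝ) < 1 + y ^ p := by
      have := Real.rpow_nonneg hy0 p; linarith
    have c2 : Continuous fun z : ℝ => 1 + z ^ p :=
      continuous_const.add (Real.continuous_rpow_const hp0.le)
    apply ContinuousAt.continuousWithinAt
    exact (c2.continuousAt.log hb.ne').sub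
      (((Gb_cont hp0).continuousAt).mul
        (((Real.continuous_rpow_const (by linarith : (0:ℝ) ≤ p - 1)).continuousAt).mul
          (c2.continuousAt.rpow_const (Or.inl hb.ne'))))
  have hmono : StrictMonoOn Φ (Set.Ici 0) := by
    apply strictMonoOn_of_deriv_pos (convex_Ici 0) hcont
    intro y hy
    rw [interior_Ici] at hy
    have hy0 : (0:ℝ) < y := hy
    have hb : (0:ℝ) < 1 + y ^ p := by
      have := Real.rpow_pos_of_pos hy0 p; linarith
    have h₁ : HasDerivAt (fun z : ℝ => z ^ p) (p * y ^ (p-1)) y :=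
      Real.hasDerivAt_rpow_const (Or.inl hy0.ne')
    have h₂ : HasDerivAt (fun z : ℝ => 1 + z ^ p) (p * y ^ (p-1)) y := h₁.const_add 1
    have h₃ : HasDerivAt (fun z : ℝ => Real.log (1 + z ^ p)) ((p * y ^ (p-1)) / (1 + y ^ p)) y :=
      h₂.log hb.ne'
    have h₄ : HasDerivAt (Gb p) (Fb p y) y := Gb_hasDeriv hp0 y
    have h₅ : HasDerivAt (fun z : ℝ => z ^ (p-1)) ((p-1) * y ^ (p-1-1)) y :=
      Real.hasDerivAt_rpow_const (Or.inl hy0.ne')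
    have h₆ : HasDerivAt (fun z : ℝ => (1 + z ^ p) ^ (-q))
        ((p * y ^ (p-1)) * (-q) * (1 + y ^ p) ^ (-q - 1)) y :=
      h₂.rpow_const (Or.inl hb.ne')
    have hD := h₃.sub (h₄.mul (h₅.mul h₆))
    have hD' : HasDerivAt Φ _ y := hD
    rw [hD'.deriv]
    simp only [Pi.mul_apply]
    -- now rewrite the derivative into a factored form
    have e0 : Fb p y = (1 + y ^ p) ^ (-(1/p)) := by
      rw [Fb, abs_of_pos hy0]
    have eA : (1 + y ^ p) ^ (-(1/p)) = ((1 + y ^ p) ^ q) * (1 + y ^ p)⁻¹ := by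
      rw [← Real.rpow_neg_one (1 + y ^ p), ← Real.rpow_add hb]
      congr 1
      rw [hq]; field_simp; ring
    have eB : (1 + y ^ p) ^ (-q) = ((1 + y ^ p) ^ q)⁻¹ := Real.rpow_neg hb.le q
    have eC : (1 + y ^ p) ^ (-q - 1) = ((1 + y ^ p) ^ q)⁻¹ * (1 + y ^ p)⁻¹ := by
      rw [show -q - 1 = -q + (-1) by ring, Real.rpow_add hb, Real.rpow_neg hb.le,
        Real.rpow_neg_one]
    have eD : y ^ (p-1-1) = y ^ (p-2) := by rw [show p-1-1 = p-2 by ring]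
    have eE : y ^ (p-1) = y ^ (p-2) * y := by
      rw [show p - 1 = (p-2) + 1 by ring, Real.rpow_add hy0, Real.rpow_one]
    have eF : y ^ p = y ^ (p-2) * (y * y) := by
      rw [show p = (p-2) + 1 + 1 by ring, Real.rpow_add hy0, Real.rpow_add hy0, Real.rpow_one]
      ring
    have hB : (0:ℝ) < y ^ (p-2) := Real.rpow_pos_of_pos hy0 _
    have hW : (0:ℝ) < (1 + y ^ p) ^ q := Real.rpow_pos_of_pos hb _
    have hGle : Gb p y ≤ y := Gb_le hp0 hy0.le
    have hW1 : 1 < (1 + y ^ p) ^ q := by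
      rw [Real.one_lt_rpow_iff_of_pos hb]
      left
      refine ⟨by nlinarith [Real.rpow_pos_of_pos hy0 p], ?_⟩
      rw [hq]; exact div_pos (by linarith) hp0
    have key : (p * y ^ (p-1)) / (1 + y ^ p) -
        (Fb p y * (y ^ (p-1) * (1 + y ^ p) ^ (-q)) +
          Gb p y * ((p-1) * y ^ (p-1-1) * ((1 + y ^ p) ^ (-q)) +
            y ^ (p-1) * ((p * y ^ (p-1)) * (-q) * (1 + y ^ p) ^ (-q - 1)))) =
        (p-1) * (y ^ (p-2) * (((1 + y ^ p) ^ q)⁻¹ * (1 + y ^ p)⁻¹)) *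
          (y * ((1 + y ^ p) ^ q) - Gb p y) := by
      rw [e0, eA, eB, eC, eD, eE]
      rw [hq]
      rw [eF]
      have hu' : (0:ℝ) < 1 + y ^ (p-2) * (y * y) := by rw [← eF]; exact hb
      field_simp
      ring
    rw [key]
    have hlast : 0 < y * ((1 + y ^ p) ^ q) - Gb p y := by nlinarith
    have h1 : (0:ℝ) < p - 1 := by linarith
    positivity
  have h0 : Φ 0 = 0 := by
    simp [hΦ, Real.zero_rpow hp0.ne', Gb_zero]
  have hfin := hmono Set.self_mem_Ici (show s ∈ Set.Ici (0:ℝ) from hs.le) hs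
  rw [h0] at hfin
  simpa [hΦ, hq] using hfin

theorem stmt_10 (p : ℝ) (hp : 1 < p) (x : ℝ) (hx : 0 < x) :
    Real.log (coshp p x) > (x / p) * tanhp p x ^ (p - 1) := by
  have hp0 : 0 < p := lt_trans one_pos hp
  obtain ⟨y, hy, hyx⟩ := exists_arsinh hp hx
  have hex : ∃ a ∈ Set.Ici (0:ℝ), arsinhp p a = x := ⟨y, hy, hyx⟩
  have hs_mem : sinhp p x ∈ Set.Ici (0:ℝ) := Function.invFunOn_mem hex
  have hsx : arsinhp p (sinhp p x) = x := Function.invFunOn_eq hex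
  set s : ℝ := sinhp p x with hs_def
  have hs0 : 0 < s := by
    rcases eq_or_lt_of_le (show (0:ℝ) ≤ s from hs_mem) with h | h
    · exfalso
      rw [← h] at hsx
      rw [show arsinhp p 0 = 0 from intervalIntegral.integral_same] at hsx
      exact hx.ne' hsx.symm
    · exact h
  have hu : (0:ℝ) < 1 + s ^ p := by
    have := Real.rpow_pos_of_pos hs0 p; linarith
  have hGx : x = Gb p s := by rw [← hsx, arsinhp_eq_Gb hs_mem]
  have hphi := phi_pos hp hs0
  show Real.log (coshp p x) > x / p * tanhp p x ^ (p - 1)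
  rw [coshp, tanhp, coshp, ← hs_def]
  rw [Real.log_rpow hu]
  rw [Real.div_rpow hs0.le (Real.rpow_nonneg hu.le _)]
  rw [← Real.rpow_mul hu.le]
  rw [show (1/p) * (p-1) = (p-1)/p by ring]
  rw [hGx]
  have hrw : s ^ (p-1) / (1 + s ^ p) ^ ((p-1)/p) =
      s ^ (p-1) * (1 + s ^ p) ^ (-((p-1)/p)) := by
    rw [Real.rpow_neg hu.le]; ring
  rw [hrw]
  have h1p : (0:ℝ) < 1/p := by positivity
  have hlt : Gb p s * (s ^ (p-1) * (1 + s ^ p) ^ (-((p-1)/p))) < Real.log (1 + s ^ p) := by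
    linarith
  calc Gb p s / p * (s ^ (p-1) * (1 + s ^ p) ^ (-((p-1)/p)))
      = 1/p * (Gb p s * (s ^ (p-1) * (1 + s ^ p) ^ (-((p-1)/p)))) := by ring
    _ < 1/p * Real.log (1 + s ^ p) := by
        exact mul_lt_mul_of_pos_left hlt h1p
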